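/- There exists a constant C > 0 such that for every y ∈ H = ℚ* × 𝔸 and every real k ≥ 0, the gauge set 𝒢_k^y = {g ∈ ℚ* × ℚ : ‖g^{-1}y‖ ≤ k} is finite with cardinality at most e^{C(k+1)}. -/

import Mathlib

instance (p : Nat.Primes) : Fact p.1.Prime := ⟨p.2⟩

/-- `⟨q⟩ = Σ_{p prime} |log |q|_p|` (a finite sum, expressed as a `tsum` over primes). -/
noncomputable def nad (q : ℚ) : ℝ :=
  ∑' p : Nat.Primes, |Real.log (padicNorm p.1 q : ℝ)|

/-- The height of an adele `z = ((z_p)_p, z_∞)`: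
`⟨z⟩⁺ = Σ_{p prime} log⁺ |z_p|_p + log⁺ |z_∞|`. -/
noncomputable def adeleHeight (zfin : (p : Nat.Primes) → ℚ_[p.1]) (zinf : ℝ) : ℝ :=
  (∑' p : Nat.Primes, max (Real.log ‖zfin p‖) 0) + max (Real.log |zinf|) 0

/-- The adelic length `‖g⁻¹ y‖` where `g = (a, b) ∈ Aff(ℚ) = ℚ* × ℚ` and
`y = (ya, (zfin, zinf)) ∈ H = ℚ* × 𝔸`, for the group law `(a,z)(a',z') = (aa', az' + z)`;
here `g⁻¹ = (a⁻¹, -a⁻¹b)` and `g⁻¹y = (a⁻¹ ya, (a⁻¹ z_p - a⁻¹ b)_p)`. -/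
noncomputable def gaugeLength (a b ya : ℚ) (zfin : (p : Nat.Primes) → ℚ_[p.1])
    (zinf : ℝ) : ℝ :=
  nad (a⁻¹ * ya) +
    adeleHeight (fun p => ((a⁻¹ : ℚ) : ℚ_[p.1]) * zfin p - ((a⁻¹ * b : ℚ) : ℚ_[p.1]))
      (((a⁻¹ : ℚ) : ℝ) * zinf - ((a⁻¹ * b : ℚ) : ℝ))



lemma padicNorm_le_one_of_not_dvd_den {p : ℕ} [hp : Fact p.Prime] {r : ℚ} (h : ¬ p ∣ r.den) :
    padicNorm p r ≤ 1 := by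
  rcases eq_or_ne r 0 with rfl | hr
  · simp [padicNorm]
  rw [padicNorm.eq_zpow_of_nonzero hr]
  have hv : 0 ≤ padicValRat p r := by
    rw [padicValRat_def, padicValNat.eq_zero_of_not_dvd h]
    simp
  have hp1 : (1:ℚ) ≤ (p:ℚ) := by exact_mod_cast hp.1.one_lt.le
  calc (p:ℚ) ^ (-padicValRat p r) ≤ (p:ℚ) ^ (0:ℤ) := by
        apply zpow_le_zpow_right₀ hp1 (by omega)
    _ = 1 := zpow_zero _

lemma padicNorm_eq_one_of_not_dvd {p : ℕ} [hp : Fact p.Prime] {r : ℚ} (hr : r ≠ 0)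
    (h1 : ¬ (p:ℤ) ∣ r.num) (h2 : ¬ p ∣ r.den) : padicNorm p r = 1 := by
  rw [padicNorm.eq_zpow_of_nonzero hr, padicValRat_def,
    padicValNat.eq_zero_of_not_dvd h2, padicValInt.eq_zero_of_not_dvd h1]
  norm_num


/-- The finset of `Nat.Primes` dividing `n`. -/
def primesOf (n : ℕ) : Finset Nat.Primes :=
  n.primeFactors.subtype Nat.Prime

lemma mem_primesOf {n : ℕ} {p : Nat.Primes} : p ∈ primesOf n ↔ p.1 ∈ n.primeFactors := by
  exact Finset.mem_subtype

lemma log_nat_eq_sum (n : ℕ) (hn : n ≠ 0) :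
    Real.log n = ∑ p ∈ primesOf n, (n.factorization p.1 : ℝ) * Real.log p.1 := by
  conv_lhs => rw [← Nat.factorization_prod_pow_eq_self hn]
  rw [Nat.prod_factorization_eq_prod_primeFactors]
  push_cast
  rw [Real.log_prod (by
    intro p hp
    have := (Nat.prime_of_mem_primeFactors hp).pos
    positivity)]
  rw [primesOf]
  refine Eq.trans (Finset.sum_congr rfl fun p _ => ?_)
    (Finset.sum_subtype_of_mem (fun q : ℕ => (n.factorization q : ℝ) * Real.log q)
      (fun x hx => Nat.prime_of_mem_primeFactors hx)).symm
  rw [Real.log_pow]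

lemma padicNorm_of_dvd_den {p : ℕ} [hp : Fact p.Prime] {q : ℚ} (h : p ∣ q.den) :
    padicNorm p q = (p:ℚ) ^ (q.den.factorization p : ℤ) := by
  have hq : q ≠ 0 := by
    rintro rfl
    simp only [Rat.den_zero, Nat.dvd_one] at h
    exact hp.1.one_lt.ne' h
  have hnum : ¬ (p:ℤ) ∣ q.num := by
    intro hd
    have : p ∣ q.num.natAbs := Int.natCast_dvd.mp hd
    have h1 : p ∣ Nat.gcd q.num.natAbs q.den := Nat.dvd_gcd this h
    rw [q.reduced, Nat.dvd_one] at h1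
    exact hp.1.one_lt.ne' h1
  rw [padicNorm.eq_zpow_of_nonzero hq, padicValRat_def, padicValInt.eq_zero_of_not_dvd hnum,
    Nat.factorization_def _ hp.1]
  push_cast
  ring_nf

lemma padicNorm_of_dvd_num {p : ℕ} [hp : Fact p.Prime] {q : ℚ} (hq : q ≠ 0)
    (h : p ∣ q.num.natAbs) :
    padicNorm p q = (p:ℚ) ^ (-(q.num.natAbs.factorization p : ℤ)) := by
  have hden : ¬ p ∣ q.den := by
    intro hd
    have h1 : p ∣ Nat.gcd q.num.natAbs q.den := Nat.dvd_gcd h hd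
    rw [q.reduced, Nat.dvd_one] at h1
    exact hp.1.one_lt.ne' h1
  rw [padicNorm.eq_zpow_of_nonzero hq, padicValRat_def, padicValNat.eq_zero_of_not_dvd hden,
    padicValInt, Nat.factorization_def _ hp.1]
  push_cast
  ring_nf


lemma nad_summand_eq_zero {q : ℚ} (hq : q ≠ 0) {p : Nat.Primes}
    (h : p ∉ primesOf (q.num.natAbs * q.den)) : |Real.log (padicNorm p.1 q : ℝ)| = 0 := by
  rw [mem_primesOf] at h
  have hne : q.num.natAbs * q.den ≠ 0 := by
    have h1 : q.num.natAbs ≠ 0 := by simpa using Rat.num_ne_zero.mpr hq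
    exact Nat.mul_ne_zero h1 q.den_nz
  rw [Nat.mem_primeFactors] at h
  push_neg at h
  have hd : ¬ p.1 ∣ q.num.natAbs * q.den := fun hd => hne (h p.2 hd)
  have h1 : ¬ (p.1 : ℤ) ∣ q.num := by
    rw [Int.natCast_dvd]
    exact fun hc => hd (hc.mul_right _)
  have h2 : ¬ p.1 ∣ q.den := fun hc => hd (hc.mul_left _)
  rw [padicNorm_eq_one_of_not_dvd hq h1 h2]
  simp

lemma nad_summable {q : ℚ} (hq : q ≠ 0) :
    Summable (fun p : Nat.Primes => |Real.log (padicNorm p.1 q : ℝ)|) :=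
  summable_of_ne_finset_zero (s := primesOf (q.num.natAbs * q.den))
    (fun _ h => nad_summand_eq_zero hq h)

lemma nad_nonneg (q : ℚ) : 0 ≤ nad q := tsum_nonneg (fun _ => abs_nonneg _)

lemma log_den_le_nad {q : ℚ} (hq : q ≠ 0) : Real.log q.den ≤ nad q := by
  rw [log_nat_eq_sum q.den q.den_nz]
  have : ∀ p ∈ primesOf q.den,
      (q.den.factorization p.1 : ℝ) * Real.log p.1 = |Real.log (padicNorm p.1 q : ℝ)| := by
    intro p hp
    have hdvd : p.1 ∣ q.den := Nat.dvd_of_mem_primeFactors (mem_primesOf.mp hp)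
    rw [padicNorm_of_dvd_den hdvd]
    push_cast
    rw [Real.log_zpow]
    rw [abs_of_nonneg (by positivity)]
    push_cast
    ring
  rw [Finset.sum_congr rfl this]
  exact (nad_summable hq).sum_le_tsum _ (fun _ _ => abs_nonneg _)

lemma log_num_le_nad {q : ℚ} (hq : q ≠ 0) : Real.log q.num.natAbs ≤ nad q := by
  rw [log_nat_eq_sum q.num.natAbs (by simpa using Rat.num_ne_zero.mpr hq)]
  have : ∀ p ∈ primesOf q.num.natAbs,
      (q.num.natAbs.factorization p.1 : ℝ) * Real.log p.1 = |Real.log (padicNorm p.1 q : ℝ)| := by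
    intro p hp
    have hdvd : p.1 ∣ q.num.natAbs := Nat.dvd_of_mem_primeFactors (mem_primesOf.mp hp)
    rw [padicNorm_of_dvd_num hq hdvd]
    push_cast
    rw [Real.log_zpow]
    push_cast
    rw [abs_of_nonpos (by
      have h1 : (0:ℝ) ≤ Real.log p.1 := Real.log_nonneg (by exact_mod_cast p.2.one_lt.le)
      have h2 : (0:ℝ) ≤ (q.num.natAbs.factorization p.1 : ℝ) := by positivity
      nlinarith)]
    push_cast
    ring
  rw [Finset.sum_congr rfl this]
  exact (nad_summable hq).sum_le_tsum _ (fun _ _ => abs_nonneg _)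

lemma padic_norm_cast {p : ℕ} [Fact p.Prime] (r : ℚ) : ‖((r:ℚ):ℚ_[p])‖ = (padicNorm p r : ℝ) :=
  Padic.eq_padicNorm r

lemma log_den_le_tsum {s : ℚ} {g : Nat.Primes → ℝ}
    (hg : ∀ p : Nat.Primes, max (Real.log (padicNorm p.1 s : ℝ)) 0 ≤ g p)
    (hsum : Summable g) : Real.log s.den ≤ ∑' p, g p := by
  have hg0 : ∀ p, 0 ≤ g p := fun p => le_trans (le_max_right _ _) (hg p)
  rcases eq_or_ne s 0 with rfl | hs
  · simpa using tsum_nonneg hg0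
  rw [log_nat_eq_sum s.den s.den_nz]
  calc ∑ p ∈ primesOf s.den, (s.den.factorization p.1 : ℝ) * Real.log p.1
      ≤ ∑ p ∈ primesOf s.den, g p := by
        refine Finset.sum_le_sum fun p hp => ?_
        have hdvd : p.1 ∣ s.den := Nat.dvd_of_mem_primeFactors (mem_primesOf.mp hp)
        refine le_trans ?_ (hg p)
        rw [padicNorm_of_dvd_den hdvd]
        push_cast
        rw [Real.log_zpow]
        exact le_max_left _ _
    _ ≤ ∑' p, g p := hsum.sum_le_tsum _ (fun p _ => hg0 p)

lemma height_summand_bound {p : ℕ} [Fact p.Prime] (r₁ r₂ : ℚ) (z : ℚ_[p]) :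
    ‖((r₁:ℚ):ℚ_[p]) * z - ((r₂:ℚ):ℚ_[p])‖ ≤ max (‖((r₁:ℚ):ℚ_[p])‖ * ‖z‖) ‖((r₂:ℚ):ℚ_[p])‖ := by
  calc ‖((r₁:ℚ):ℚ_[p]) * z - ((r₂:ℚ):ℚ_[p])‖
      = ‖((r₁:ℚ):ℚ_[p]) * z + (-((r₂:ℚ):ℚ_[p]))‖ := by ring_nf
    _ ≤ max ‖((r₁:ℚ):ℚ_[p]) * z‖ ‖(-((r₂:ℚ):ℚ_[p]))‖ := Padic.nonarchimedean _ _
    _ = max (‖((r₁:ℚ):ℚ_[p])‖ * ‖z‖) ‖((r₂:ℚ):ℚ_[p])‖ := by rw [norm_neg, norm_mul]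

lemma height_summable (r₁ r₂ : ℚ) (zfin : (p : Nat.Primes) → ℚ_[p.1])
    (hz : {p : Nat.Primes | 1 < ‖zfin p‖}.Finite) :
    Summable (fun p : Nat.Primes =>
      max (Real.log ‖((r₁:ℚ):ℚ_[p.1]) * zfin p - ((r₂:ℚ):ℚ_[p.1])‖) 0) := by
  apply summable_of_ne_finset_zero
    (s := hz.toFinset ∪ primesOf r₁.den ∪ primesOf r₂.den)
  intro p hp
  simp only [Finset.mem_union, Set.Finite.mem_toFinset, Set.mem_setOf_eq, not_or] at hp
  obtain ⟨⟨hz1, h1⟩, h2⟩ := hp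
  have hz1' : ‖zfin p‖ ≤ 1 := not_lt.mp hz1
  have hr1 : ‖((r₁:ℚ):ℚ_[p.1])‖ ≤ 1 := by
    rw [padic_norm_cast]
    exact_mod_cast padicNorm_le_one_of_not_dvd_den (fun hc => h1 (mem_primesOf.mpr
      (Nat.mem_primeFactors.mpr ⟨p.2, hc, r₁.den_nz⟩)))
  have hr2 : ‖((r₂:ℚ):ℚ_[p.1])‖ ≤ 1 := by
    rw [padic_norm_cast]
    exact_mod_cast padicNorm_le_one_of_not_dvd_den (fun hc => h2 (mem_primesOf.mpr
      (Nat.mem_primeFactors.mpr ⟨p.2, hc, r₂.den_nz⟩)))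
  have hb : ‖((r₁:ℚ):ℚ_[p.1]) * zfin p - ((r₂:ℚ):ℚ_[p.1])‖ ≤ 1 := by
    refine le_trans (height_summand_bound r₁ r₂ (zfin p)) (max_le ?_ hr2)
    calc ‖((r₁:ℚ):ℚ_[p.1])‖ * ‖zfin p‖ ≤ 1 * 1 :=
          mul_le_mul hr1 hz1' (norm_nonneg _) zero_le_one
      _ = 1 := mul_one 1
  exact max_eq_right (Real.log_nonpos (norm_nonneg _) hb)


lemma ratBox (B C : ℝ) (hB : 0 ≤ B) (hC : 0 ≤ C) :
    {s : ℚ | (s.num.natAbs : ℝ) ≤ B ∧ (s.den : ℝ) ≤ C}.Finite ∧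
    (({s : ℚ | (s.num.natAbs : ℝ) ≤ B ∧ (s.den : ℝ) ≤ C}.ncard : ℝ) ≤ (2*B+1) * (C+1)) := by
  set N := ⌊B⌋₊ with hN
  set M := ⌊C⌋₊ with hM
  set S := {s : ℚ | (s.num.natAbs : ℝ) ≤ B ∧ (s.den : ℝ) ≤ C} with hS
  set T := (Finset.Icc (-(N:ℤ)) (N:ℤ) ×ˢ Finset.Icc 1 M : Finset (ℤ × ℕ))
  have hinj : Function.Injective (fun s : ℚ => (s.num, s.den)) := by
    intro x y h
    simp only [Prod.mk.injEq] at h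
    exact Rat.ext h.1 h.2
  have himg : (fun s : ℚ => (s.num, s.den)) '' S ⊆ (T : Set (ℤ × ℕ)) := by
    rintro _ ⟨s, hs, rfl⟩
    obtain ⟨h1, h2⟩ := hs
    simp only [T, Finset.coe_product, Set.mem_prod, Finset.mem_coe, Finset.mem_Icc]
    have hn : s.num.natAbs ≤ N := Nat.le_floor h1
    have hm : s.den ≤ M := Nat.le_floor h2
    constructor
    · omega
    · exact ⟨s.den_pos, hm⟩
  have hTfin : (T : Set (ℤ × ℕ)).Finite := T.finite_toSet
  have hfin : S.Finite :=
    Set.Finite.of_finite_image (hTfin.subset himg) (hinj.injOn)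
  refine ⟨hfin, ?_⟩
  have hcard : S.ncard ≤ T.card := by
    rw [← Set.ncard_image_of_injective S hinj]
    rw [← Set.ncard_coe_finset T]
    exact Set.ncard_le_ncard himg hTfin
  have hTcard : (T.card : ℝ) ≤ (2*B+1) * (C+1) := by
    rw [Finset.card_product, Nat.card_Icc, Int.card_Icc]
    have h1 : ((N:ℤ) + 1 - (-(N:ℤ))).toNat = 2*N+1 := by omega
    rw [h1]
    have hNB : (N : ℝ) ≤ B := Nat.floor_le hB
    have hMC : (M : ℝ) ≤ C := Nat.floor_le hC
    push_cast
    nlinarith [Nat.cast_nonneg (α := ℝ) M, Nat.cast_nonneg (α := ℝ) N]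
  calc (S.ncard : ℝ) ≤ (T.card : ℝ) := by exact_mod_cast hcard
    _ ≤ _ := hTcard


lemma logplus_mono {x y : ℝ} (hx : 0 ≤ x) (h : x ≤ y) :
    max (Real.log x) 0 ≤ max (Real.log y) 0 := by
  rcases le_or_gt x 1 with h1 | h1
  · rw [max_eq_right (Real.log_nonpos hx h1)]
    exact le_max_right _ _
  · have hlog : Real.log x ≤ Real.log y := by gcongr <;> linarith
    exact max_le_max hlog le_rfl

lemma logplus_max_le {x y : ℝ} (hx : 0 ≤ x) (hy : 0 ≤ y) :
    max (Real.log (max x y)) 0 ≤ max (Real.log x) 0 + max (Real.log y) 0 := by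
  rcases le_total x y with h | h
  · rw [max_eq_right h]
    have := le_max_right (Real.log x) (0:ℝ)
    linarith [le_add_of_nonneg_left (a := max (Real.log y) 0) (le_trans (le_refl 0) (le_max_right (Real.log x) 0))]
  · rw [max_eq_left h]
    linarith [le_max_right (Real.log y) (0:ℝ)]

lemma le_exp_of_log_le' {t c : ℝ} (hc : 0 ≤ c) (ht : 0 ≤ t) (h : Real.log t ≤ c) :
    t ≤ Real.exp c := by
  rcases le_or_gt t 1 with h1 | h1
  · exact le_trans h1 (Real.one_le_exp hc)
  · rw [← Real.exp_log (by linarith : (0:ℝ) < t)]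
    exact Real.exp_le_exp.mpr h

lemma natAbs_num_eq (s : ℚ) : (s.num.natAbs : ℝ) = |(s:ℝ)| * s.den := by
  have hd : (0:ℝ) < (s.den : ℝ) := by exact_mod_cast s.den_pos
  rw [Rat.cast_def, abs_div, abs_of_pos hd, div_mul_cancel₀ _ hd.ne']
  push_cast [Nat.cast_natAbs]
  norm_num


/-- There is a constant `C > 0` such that for every
`y = (ya, z) ∈ H = ℚ* × 𝔸` (where the adele `z` is a family `(z_p)_p` with
`|z_p|_p ≤ 1` for all but finitely many primes, together with a real component) and
every real `k ≥ 0`, the gauge set `𝒢_k^y = {g ∈ ℚ* × ℚ : ‖g⁻¹y‖ ≤ k}` is finite with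
cardinality at most `e^{C(k+1)}`. -/
theorem statement13 :
    ∃ C : ℝ, 0 < C ∧
      ∀ (ya : ℚ), ya ≠ 0 →
      ∀ (zfin : (p : Nat.Primes) → ℚ_[p.1]) (zinf : ℝ),
        {p : Nat.Primes | 1 < ‖zfin p‖}.Finite →
      ∀ k : ℝ, 0 ≤ k →
        {g : ℚ × ℚ | g.1 ≠ 0 ∧ gaugeLength g.1 g.2 ya zfin zinf ≤ k}.Finite ∧
          (({g : ℚ × ℚ | g.1 ≠ 0 ∧ gaugeLength g.1 g.2 ya zfin zinf ≤ k}.ncard : ℝ) ≤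
            Real.exp (C * (k + 1))) := by
  classical
  refine ⟨16, by norm_num, ?_⟩
  intro ya hya zfin zinf hz k hk
  set S := {g : ℚ × ℚ | g.1 ≠ 0 ∧ gaugeLength g.1 g.2 ya zfin zinf ≤ k} with hSdef
  set E := Real.exp k with hE_def
  have hE1 : (1:ℝ) ≤ E := Real.one_le_exp hk
  -- splitting the length into its three parts
  have split : ∀ a b : ℚ, (a, b) ∈ S →
      nad (a⁻¹*ya) ≤ k ∧
      (∑' p : Nat.Primes,
        max (Real.log ‖((a⁻¹:ℚ):ℚ_[p.1]) * zfin p - ((a⁻¹*b:ℚ):ℚ_[p.1])‖) 0) ≤ k ∧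
      max (Real.log |((a⁻¹:ℚ):ℝ)*zinf - ((a⁻¹*b:ℚ):ℝ)|) 0 ≤ k := by
    intro a b hab
    obtain ⟨ha, hlen⟩ := hab
    simp only [gaugeLength, adeleHeight] at hlen
    have h1 := nad_nonneg (a⁻¹*ya)
    have h2 : (0:ℝ) ≤ ∑' p : Nat.Primes,
        max (Real.log ‖((a⁻¹:ℚ):ℚ_[p.1]) * zfin p - ((a⁻¹*b:ℚ):ℚ_[p.1])‖) 0 :=
      tsum_nonneg fun _ => le_max_right _ _
    have h3 : (0:ℝ) ≤ max (Real.log |((a⁻¹:ℚ):ℝ)*zinf - ((a⁻¹*b:ℚ):ℝ)|) 0 := le_max_right _ _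
    exact ⟨by linarith, by linarith, by linarith⟩
  -- infinite place bound
  have hinfB : ∀ a b : ℚ, (a,b) ∈ S →
      |((a⁻¹:ℚ):ℝ)*zinf - ((a⁻¹*b:ℚ):ℝ)| ≤ E := by
    intro a b hab
    have h := (split a b hab).2.2
    exact le_exp_of_log_le' hk (abs_nonneg _) (le_trans (le_max_left _ _) h)
  -- Q1 membership
  have hq1 : ∀ a b : ℚ, (a,b) ∈ S →
      (((a⁻¹*ya).num.natAbs : ℝ) ≤ E ∧ (((a⁻¹*ya).den : ℕ) : ℝ) ≤ E) := by
    intro a b hab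
    have hq0 : a⁻¹*ya ≠ 0 := mul_ne_zero (inv_ne_zero hab.1) hya
    have hnad := (split a b hab).1
    constructor
    · exact le_exp_of_log_le' hk (by positivity) (le_trans (log_num_le_nad hq0) hnad)
    · exact le_exp_of_log_le' hk (by positivity) (le_trans (log_den_le_nad hq0) hnad)
  -- Q2 membership for differences within a fiber
  have hq2 : ∀ a b b' : ℚ, (a,b) ∈ S → (a,b') ∈ S →
      (((a⁻¹*b - a⁻¹*b').num.natAbs : ℝ) ≤ 2*E^3 ∧
        (((a⁻¹*b - a⁻¹*b').den : ℕ) : ℝ) ≤ E^2) := by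
    intro a b b' hab hab'
    set s : ℚ := a⁻¹*b - a⁻¹*b' with hs_def
    have hsum1 := height_summable a⁻¹ (a⁻¹*b) zfin hz
    have hsum2 := height_summable a⁻¹ (a⁻¹*b') zfin hz
    have hden : ((s.den : ℕ) : ℝ) ≤ E^2 := by
      have hlog : Real.log s.den ≤ k + k := by
        refine le_trans (log_den_le_tsum
          (g := fun p : Nat.Primes =>
            max (Real.log ‖((a⁻¹:ℚ):ℚ_[p.1]) * zfin p - ((a⁻¹*b:ℚ):ℚ_[p.1])‖) 0 +
            max (Real.log ‖((a⁻¹:ℚ):ℚ_[p.1]) * zfin p - ((a⁻¹*b':ℚ):ℚ_[p.1])‖) 0)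
          ?_ (hsum1.add hsum2)) ?_
        · intro p
          have hnorm : (padicNorm p.1 s : ℝ) = ‖((s:ℚ):ℚ_[p.1])‖ := (padic_norm_cast s).symm
          have hcast : ((s:ℚ):ℚ_[p.1]) =
              (((a⁻¹:ℚ):ℚ_[p.1]) * zfin p - ((a⁻¹*b':ℚ):ℚ_[p.1])) -
              (((a⁻¹:ℚ):ℚ_[p.1]) * zfin p - ((a⁻¹*b:ℚ):ℚ_[p.1])) := by
            push_cast [hs_def]
            ring
          set x := ((a⁻¹:ℚ):ℚ_[p.1]) * zfin p - ((a⁻¹*b:ℚ):ℚ_[p.1]) with hx_def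
          set y := ((a⁻¹:ℚ):ℚ_[p.1]) * zfin p - ((a⁻¹*b':ℚ):ℚ_[p.1]) with hy_def
          have h1 : ‖y - x‖ ≤ max ‖y‖ ‖x‖ := by
            calc ‖y - x‖ = ‖y + (-x)‖ := by ring_nf
              _ ≤ max ‖y‖ ‖(-x)‖ := Padic.nonarchimedean _ _
              _ = max ‖y‖ ‖x‖ := by rw [norm_neg]
          show max (Real.log (padicNorm p.1 s : ℝ)) 0 ≤
            max (Real.log ‖x‖) 0 + max (Real.log ‖y‖) 0
          rw [hnorm, hcast]
          calc max (Real.log ‖y - x‖) 0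
              ≤ max (Real.log (max ‖y‖ ‖x‖)) 0 := logplus_mono (norm_nonneg _) h1
            _ ≤ max (Real.log ‖y‖) 0 + max (Real.log ‖x‖) 0 :=
                logplus_max_le (norm_nonneg _) (norm_nonneg _)
            _ = max (Real.log ‖x‖) 0 + max (Real.log ‖y‖) 0 := by ring
        · rw [hsum1.tsum_add hsum2]
          exact add_le_add (split a b hab).2.1 (split a b' hab').2.1
      have h2 : ((s.den : ℕ) : ℝ) ≤ Real.exp (k + k) :=
        le_exp_of_log_le' (by linarith) (by positivity) hlog
      calc ((s.den : ℕ) : ℝ) ≤ Real.exp (k + k) := h2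
        _ = E^2 := by rw [Real.exp_add]; ring
    have hreal : |(s:ℝ)| ≤ 2*E := by
      have h1 := hinfB a b hab
      have h2 := hinfB a b' hab'
      have hcast : (s:ℝ) = (((a⁻¹:ℚ):ℝ)*zinf - ((a⁻¹*b':ℚ):ℝ)) -
          (((a⁻¹:ℚ):ℝ)*zinf - ((a⁻¹*b:ℚ):ℝ)) := by
        push_cast [hs_def]
        ring
      rw [hcast]
      set u := ((a⁻¹:ℚ):ℝ)*zinf - ((a⁻¹*b':ℚ):ℝ) with hu
      set v := ((a⁻¹:ℚ):ℝ)*zinf - ((a⁻¹*b:ℚ):ℝ) with hv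
      have h4 : |u + -v| ≤ |u| + |-v| := abs_add_le _ _
      rw [abs_neg] at h4
      rw [sub_eq_add_neg]
      linarith
    have hnum : ((s.num.natAbs : ℕ) : ℝ) ≤ 2*E^3 := by
      rw [natAbs_num_eq s]
      have h1 : |(s:ℝ)| * ((s.den : ℕ) : ℝ) ≤ (2*E) * E^2 :=
        mul_le_mul hreal hden (by positivity) (by positivity)
      calc |(s:ℝ)| * ((s.den : ℕ) : ℝ) ≤ (2*E) * E^2 := h1
        _ = 2*E^3 := by ring
    exact ⟨hnum, hden⟩
  -- base point in each fiber
  set c : ℚ → ℚ := fun a => if h : ∃ b, (a, b) ∈ S then h.choose else 0 with hc_def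
  have hcS : ∀ a b : ℚ, (a,b) ∈ S → (a, c a) ∈ S := by
    intro a b hab
    have hex : ∃ b, (a,b) ∈ S := ⟨b, hab⟩
    simp only [hc_def, dif_pos hex]
    exact hex.choose_spec
  -- the injection
  set Φ : ℚ × ℚ → ℚ × ℚ :=
    fun g => (g.1⁻¹ * ya, g.1⁻¹ * g.2 - g.1⁻¹ * (c g.1)) with hΦ
  have hΦinj : Set.InjOn Φ S := by
    intro g hg g' hg' heq
    simp only [hΦ, Prod.mk.injEq] at heq
    have ha : g.1 = g'.1 := inv_injective (mul_right_cancel₀ hya heq.1)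
    have hb : g.2 = g'.2 := by
      have h2 := heq.2
      rw [ha] at h2
      have hne : g'.1⁻¹ ≠ 0 := inv_ne_zero hg'.1
      have h3 : g'.1⁻¹ * g.2 = g'.1⁻¹ * g'.2 := by linarith [h2]
      exact mul_left_cancel₀ hne h3
    exact Prod.ext ha hb
  obtain ⟨hfin1, hcard1⟩ := ratBox E E (by linarith) (by linarith)
  obtain ⟨hfin2, hcard2⟩ := ratBox (2*E^3) (E^2) (by positivity) (by positivity)
  set Q1 := {s : ℚ | (s.num.natAbs : ℝ) ≤ E ∧ (s.den : ℝ) ≤ E} with hQ1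
  set Q2 := {s : ℚ | (s.num.natAbs : ℝ) ≤ 2*E^3 ∧ (s.den : ℝ) ≤ E^2} with hQ2
  have himg : Φ '' S ⊆ Q1 ×ˢ Q2 := by
    rintro _ ⟨g, hg, rfl⟩
    have hg' : (g.1, g.2) ∈ S := hg
    have h1 := hq1 g.1 g.2 hg'
    have h2 := hq2 g.1 g.2 (c g.1) hg' (hcS g.1 g.2 hg')
    exact ⟨h1, h2⟩
  have hfinQ : (Q1 ×ˢ Q2).Finite := hfin1.prod hfin2
  have hfinS : S.Finite := Set.Finite.of_finite_image (hfinQ.subset himg) hΦinj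
  refine ⟨hfinS, ?_⟩
  -- cardinality chain
  have h1 : S.ncard = (Φ '' S).ncard := (Set.ncard_image_of_injOn hΦinj).symm
  have h2 : (Φ '' S).ncard ≤ (Q1 ×ˢ Q2).ncard := Set.ncard_le_ncard himg hfinQ
  have h3 : (Q1 ×ˢ Q2).ncard = Q1.ncard * Q2.ncard := by
    rw [← Nat.card_coe_set_eq, ← Nat.card_coe_set_eq, ← Nat.card_coe_set_eq,
      Nat.card_congr (Equiv.Set.prod Q1 Q2), Nat.card_prod]
  -- numeric bound
  set X := Real.exp (4*(k+1)) with hX_def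
  have hXeq : X = E^4 * Real.exp 4 := by
    rw [hX_def, hE_def, show (4:ℝ)*(k+1) = (k+k+k+k) + 4 by ring,
      Real.exp_add, Real.exp_add, Real.exp_add, Real.exp_add]
    ring
  have h5 : (5:ℝ) ≤ Real.exp 4 := by
    have := Real.add_one_le_exp (4:ℝ)
    linarith
  have hEp2 : E ≤ E^2 := by nlinarith
  have hEp3 : E^2 ≤ E^3 := by nlinarith
  have hEp4 : E^3 ≤ E^4 := by nlinarith
  have hE4 : (1:ℝ) ≤ E^4 := by nlinarith
  have hf1 : 2*E+1 ≤ X := by rw [hXeq]; nlinarith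
  have hf2 : E+1 ≤ X := by rw [hXeq]; nlinarith
  have hf3 : 2*(2*E^3)+1 ≤ X := by rw [hXeq]; nlinarith
  have hf4 : E^2+1 ≤ X := by rw [hXeq]; nlinarith
  have hX0 : (0:ℝ) ≤ X := Real.exp_nonneg _
  have hprod1 : (Q1.ncard : ℝ) ≤ X * X := by
    refine le_trans hcard1 ?_
    have := mul_le_mul hf1 hf2 (by positivity) hX0
    linarith
  have hprod2 : (Q2.ncard : ℝ) ≤ X * X := by
    refine le_trans hcard2 ?_
    have := mul_le_mul hf3 hf4 (by positivity) hX0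
    linarith
  have hfinal : (Q1.ncard : ℝ) * (Q2.ncard : ℝ) ≤ Real.exp (16*(k+1)) := by
    have hc1 : (0:ℝ) ≤ (Q1.ncard : ℝ) := Nat.cast_nonneg _
    have hXX : (0:ℝ) ≤ X * X := by positivity
    have h6 : (Q1.ncard : ℝ) * (Q2.ncard : ℝ) ≤ (X*X) * (X*X) :=
      mul_le_mul hprod1 hprod2 (Nat.cast_nonneg _) hXX
    refine le_trans h6 ?_
    have : (X*X)*(X*X) = Real.exp (16*(k+1)) := by
      rw [hX_def, ← Real.exp_add, ← Real.exp_add]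
      congr 1
      ring
    linarith [this.le]
  calc (S.ncard : ℝ) = ((Φ '' S).ncard : ℝ) := by rw [h1]
    _ ≤ ((Q1 ×ˢ Q2).ncard : ℝ) := by exact_mod_cast h2
    _ = (Q1.ncard : ℝ) * (Q2.ncard : ℝ) := by rw [h3]; push_cast; ring
    _ ≤ Real.exp (16*(k+1)) := hfinal
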